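/- The neighborhoods F = 1 + x + 1/y + x/y (Odd-rule 033) and G = y/x + xy + 1/(xy) + x/y (Odd-rule 505) are combinatorially equivalent: |F^n| = |G^n| for all n ≥ 0. -/

import Mathlib

/-- The ring `R = GF(2)[x, x⁻¹, y, y⁻¹]`, with `x^i y^j` the element
`AddMonoidAlgebra.single (i, j) 1`. -/
abbrev R2 := AddMonoidAlgebra (ZMod 2) (ℤ × ℤ)

/-- The monomial `x^i y^j` of `R`. -/
noncomputable def mon (i j : ℤ) : R2 := AddMonoidAlgebra.single (i, j) 1

/-- Doubling map on exponents, corresponding to `x → x²`, `y → y²`. -/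
def dbl : (ℤ × ℤ) →+ (ℤ × ℤ) where
  toFun p := (2 * p.1, 2 * p.2)
  map_zero' := by simp
  map_add' p q := by ext <;> simp [mul_add]

lemma dbl_inj : Function.Injective dbl := by
  intro p q h
  simp only [dbl, AddMonoidHom.coe_mk, ZeroHom.coe_mk, Prod.ext_iff] at h ⊢
  omega

/-- The neighborhoods `F = 1 + x + 1/y + x/y` (Odd-rule 033) and
`G = y/x + xy + 1/(xy) + x/y` (Odd-rule 505) are combinatorially equivalent:
`|F^n| = |G^n|` for all `n ≥ 0`. -/
theorem oddRule033_equiv_505 (n : ℕ) :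
    ((mon 0 0 + mon 1 0 + mon 0 (-1) + mon 1 (-1)) ^ n).coeff.support.card
      = ((mon (-1) 1 + mon 1 1 + mon (-1) (-1) + mon 1 (-1)) ^ n).coeff.support.card := by
  classical
  set F : R2 := mon 0 0 + mon 1 0 + mon 0 (-1) + mon 1 (-1) with hF
  set G : R2 := mon (-1) 1 + mon 1 1 + mon (-1) (-1) + mon 1 (-1) with hG
  let φ := AddMonoidAlgebra.mapDomainRingHom (ZMod 2) dbl
  have key : G = AddMonoidAlgebra.single ((-1 : ℤ), (1 : ℤ)) (1 : ZMod 2) * φ F := by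
    rw [hF, hG]
    simp only [φ, map_add, AddMonoidAlgebra.mapDomainRingHom_apply, mon, mul_add, dbl,
      AddMonoidHom.toFun_eq_coe, Finsupp.mapDomain.addMonoidHom_apply, Finsupp.mapDomain_single,
      AddMonoidHom.coe_mk, ZeroHom.coe_mk, AddMonoidAlgebra.single_mul_single, one_mul,
      Prod.mk_add_mk]
    norm_num
  have hGn : G ^ n = AddMonoidAlgebra.single (n • ((-1 : ℤ), (1 : ℤ))) (1 : ZMod 2)
      * φ (F ^ n) := by
    rw [key, mul_pow, AddMonoidAlgebra.single_pow, one_pow, map_pow]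
  rw [hGn, AddMonoidAlgebra.support_coeff_single_mul _ _ (fun y => by simp) _, Finset.card_map]
  show _ = ((Finsupp.mapDomain dbl (F ^ n).coeff).support).card
  rw [Finsupp.mapDomain_support_of_injective dbl_inj,
    Finset.card_image_of_injective _ dbl_inj]
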